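/- Let T > 0, n ≥ 1, t_k = kT/n for k ∈ {0,…,n}, and α, β ∈ (0,1). There exists a constant C depending only on α and β such that for all k ≤ n, ∑_{i=1}^{k} ((t_k − t_{i−1})^β − (t_k − t_i)^β)(t_i^α − t_{i−1}^α) ≤ C · (T/n)^(α+β) · k^(α+β−1). -/

import Mathlib

open Finset Real

private lemma tel_aux (f : ℕ → ℝ) (a : ℕ) : ∀ b, a ≤ b →
    ∑ i ∈ Finset.Ioc a b, (f i - f (i - 1)) = f b - f a := by
  intro b hb
  induction b, hb using Nat.le_induction with
  | base => simp
  | succ b hb ih =>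
      rw [← Finset.Icc_add_one_left_eq_Ioc, Finset.sum_Icc_succ_top (by omega), Finset.Icc_add_one_left_eq_Ioc, ih]
      have : (b + 1 - 1 : ℕ) = b := by omega
      rw [this]; ring

private lemma bern_aux {p x : ℝ} (hp0 : 0 < p) (hp1 : p ≤ 1) (hx : 0 < x) :
    (x + 1) ^ p - x ^ p ≤ p * x ^ (p - 1) := by
  have h1 : x + 1 = x * (1 + 1 / x) := by field_simp
  have h2 : (x + 1) ^ p = x ^ p * (1 + 1 / x) ^ p := by
    rw [h1, Real.mul_rpow hx.le (by positivity)]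
  have h3 : (1 + 1 / x) ^ p ≤ 1 + p * (1 / x) :=
    rpow_one_add_le_one_add_mul_self (le_trans (by norm_num : (-1:ℝ) ≤ 0) (by positivity)) hp0.le hp1
  have h4 : x ^ (p - 1) = x ^ p / x := by rw [Real.rpow_sub hx, Real.rpow_one]
  have h5 : (0:ℝ) ≤ x ^ p := Real.rpow_nonneg hx.le p
  have h6 : (x + 1) ^ p ≤ x ^ p * (1 + p * (1 / x)) := by
    rw [h2]; exact mul_le_mul_of_nonneg_left h3 h5
  have h7 : x ^ p * (1 + p * (1 / x)) = x ^ p + p * x ^ (p - 1) := by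
    rw [h4]; field_simp
  linarith

private lemma quarter_aux {k c q : ℝ} (hk : 0 < k) (hc : 1 ≤ c) (hc4 : c ≤ 4)
    (hq : -1 ≤ q) (hq0 : q ≤ 0) : (k / c) ^ q ≤ 4 * k ^ q := by
  have hc0 : (0:ℝ) < c := lt_of_lt_of_le one_pos hc
  have h1 : (k / c) ^ q = k ^ q * (c ^ q)⁻¹ := by
    rw [div_eq_mul_inv, Real.mul_rpow hk.le (by positivity), Real.inv_rpow hc0.le]
  have h2 : c ^ (-1 : ℝ) ≤ c ^ q := Real.rpow_le_rpow_of_exponent_le hc hq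
  have h3 : c ^ (-1 : ℝ) = c⁻¹ := by
    rw [show (-1:ℝ) = ((-1 : ℤ) : ℝ) by norm_num, Real.rpow_intCast]; simp
  have h4 : (4:ℝ)⁻¹ ≤ c ^ q := by
    refine le_trans ?_ h2
    rw [h3]
    exact inv_anti₀ hc0 hc4
  have h5 : (c ^ q)⁻¹ ≤ 4 := by
    rw [← inv_inv (4:ℝ)]
    exact inv_anti₀ (by norm_num) h4
  rw [h1, mul_comm (4:ℝ) (k ^ q)]
  exact mul_le_mul_of_nonneg_left h5 (Real.rpow_nonneg hk.le q)

private lemma disc_aux {α β : ℝ} (hα : α ∈ Set.Ioo (0:ℝ) 1) (hβ : β ∈ Set.Ioo (0:ℝ) 1)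
    (k : ℕ) (hk : 1 ≤ k) :
    ∑ i ∈ Finset.Icc 1 k,
        (((k:ℝ) - ((i:ℝ) - 1)) ^ β - ((k:ℝ) - (i:ℝ)) ^ β) * ((i:ℝ) ^ α - ((i:ℝ) - 1) ^ α)
      ≤ 8 * (k:ℝ) ^ (α + β - 1) := by
  obtain ⟨hα0, hα1⟩ := hα
  obtain ⟨hβ0, hβ1⟩ := hβ
  have hkpos : (0:ℝ) < k := by exact_mod_cast hk
  rcases eq_or_lt_of_le hk with h1 | hk2
  · -- k = 1
    rw [← h1]
    norm_num [Real.zero_rpow hβ0.ne', Real.zero_rpow hα0.ne']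
  · -- 2 ≤ k
    have hk2' : 2 ≤ k := hk2
    set m : ℕ := k / 2 with hm
    have hm1 : 1 ≤ m := by omega
    have hmk : m ≤ k := by omega
    have h2m : 2 * m ≤ k := by omega
    have h4m : k ≤ 4 * m := by omega
    have hmR : (m:ℝ) ≤ (k:ℝ) / 2 := by
      have : (2:ℝ) * m ≤ k := by exact_mod_cast h2m
      linarith
    have hmR4 : (k:ℝ) / 4 ≤ (m:ℝ) := by
      have : (k:ℝ) ≤ 4 * m := by exact_mod_cast h4m
      linarith
    have hkR2 : (1:ℝ) ≤ (k:ℝ) / 2 := by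
      have : (2:ℝ) ≤ k := by exact_mod_cast hk2'
      linarith
    have hsplit :
        ∑ i ∈ Finset.Icc 1 k,
            (((k:ℝ) - ((i:ℝ) - 1)) ^ β - ((k:ℝ) - (i:ℝ)) ^ β) * ((i:ℝ) ^ α - ((i:ℝ) - 1) ^ α)
          = (∑ i ∈ Finset.Ioc 0 m,
              (((k:ℝ) - ((i:ℝ) - 1)) ^ β - ((k:ℝ) - (i:ℝ)) ^ β) * ((i:ℝ) ^ α - ((i:ℝ) - 1) ^ α))
            + ∑ i ∈ Finset.Ioc m k,
              (((k:ℝ) - ((i:ℝ) - 1)) ^ β - ((k:ℝ) - (i:ℝ)) ^ β)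
                * ((i:ℝ) ^ α - ((i:ℝ) - 1) ^ α) := by
      rw [show (1:ℕ) = 0 + 1 from rfl, Finset.Icc_add_one_left_eq_Ioc,
        Finset.sum_Ioc_consecutive _ (Nat.zero_le m) hmk]
    rw [hsplit]
    -- first sum: bound the β-factor pointwise
    have hS1 : (∑ i ∈ Finset.Ioc 0 m,
          (((k:ℝ) - ((i:ℝ) - 1)) ^ β - ((k:ℝ) - (i:ℝ)) ^ β) * ((i:ℝ) ^ α - ((i:ℝ) - 1) ^ α))
        ≤ (4 * β * (k:ℝ) ^ (β - 1)) * ∑ i ∈ Finset.Ioc 0 m, ((i:ℝ) ^ α - ((i:ℝ) - 1) ^ α) := by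
      rw [Finset.mul_sum]
      apply Finset.sum_le_sum
      intro i hi
      rw [Finset.mem_Ioc] at hi
      obtain ⟨hi1, hi2⟩ := hi
      have hiR : (i:ℝ) ≤ m := by exact_mod_cast hi2
      have hi1R : (1:ℝ) ≤ i := by exact_mod_cast hi1
      set x : ℝ := (k:ℝ) - i with hxdef
      have hxhalf : (k:ℝ) / 2 ≤ x := by
        simp only [hxdef]; linarith
      have hxpos : 0 < x := by linarith
      have hgnn : (0:ℝ) ≤ (i:ℝ) ^ α - ((i:ℝ) - 1) ^ α :=
        sub_nonneg.mpr (Real.rpow_le_rpow (by linarith : (0:ℝ) ≤ (i:ℝ) - 1)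
          (by linarith : (i:ℝ) - 1 ≤ (i:ℝ)) hα0.le)
      have hf1 : ((k:ℝ) - ((i:ℝ) - 1)) ^ β - ((k:ℝ) - (i:ℝ)) ^ β ≤ β * x ^ (β - 1) := by
        have hx1 : (k:ℝ) - ((i:ℝ) - 1) = x + 1 := by simp only [hxdef]; ring
        rw [hx1]
        exact bern_aux hβ0 hβ1.le hxpos
      have hf2 : β * x ^ (β - 1) ≤ β * ((k:ℝ) / 2) ^ (β - 1) :=
        mul_le_mul_of_nonneg_left
          (Real.rpow_le_rpow_of_nonpos (by linarith) hxhalf (by linarith)) hβ0.le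
      have hf3 : ((k:ℝ) / 2) ^ (β - 1) ≤ 4 * (k:ℝ) ^ (β - 1) :=
        quarter_aux hkpos one_le_two (by norm_num) (by linarith) (by linarith)
      have hfle : ((k:ℝ) - ((i:ℝ) - 1)) ^ β - ((k:ℝ) - (i:ℝ)) ^ β
          ≤ 4 * β * (k:ℝ) ^ (β - 1) := by
        calc ((k:ℝ) - ((i:ℝ) - 1)) ^ β - ((k:ℝ) - (i:ℝ)) ^ β ≤ β * x ^ (β - 1) := hf1
          _ ≤ β * ((k:ℝ) / 2) ^ (β - 1) := hf2
          _ ≤ β * (4 * (k:ℝ) ^ (β - 1)) := mul_le_mul_of_nonneg_left hf3 hβ0.le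
          _ = 4 * β * (k:ℝ) ^ (β - 1) := by ring
      exact mul_le_mul_of_nonneg_right hfle hgnn
    -- telescope for the α-factor
    have htel1 : ∑ i ∈ Finset.Ioc 0 m, ((i:ℝ) ^ α - ((i:ℝ) - 1) ^ α) = (m:ℝ) ^ α := by
      have h := tel_aux (fun j => (j:ℝ) ^ α) 0 m (Nat.zero_le m)
      simp only [Nat.cast_zero, Real.zero_rpow hα0.ne', sub_zero] at h
      rw [← h]
      apply Finset.sum_congr rfl
      intro i hi
      rw [Finset.mem_Ioc] at hi
      have hc : ((i - 1 : ℕ) : ℝ) = (i:ℝ) - 1 := by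
        have h1i : 1 ≤ i := hi.1
        push_cast [h1i]
        ring
      simp only [hc]
    -- second sum: bound the α-factor pointwise
    have hS2 : (∑ i ∈ Finset.Ioc m k,
          (((k:ℝ) - ((i:ℝ) - 1)) ^ β - ((k:ℝ) - (i:ℝ)) ^ β) * ((i:ℝ) ^ α - ((i:ℝ) - 1) ^ α))
        ≤ (∑ i ∈ Finset.Ioc m k, (((k:ℝ) - ((i:ℝ) - 1)) ^ β - ((k:ℝ) - (i:ℝ)) ^ β))
            * (4 * α * (k:ℝ) ^ (α - 1)) := by
      rw [Finset.sum_mul]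
      apply Finset.sum_le_sum
      intro i hi
      rw [Finset.mem_Ioc] at hi
      obtain ⟨hi1, hi2⟩ := hi
      have hiR : (m:ℝ) < (i:ℝ) := by exact_mod_cast hi1
      have hi2R : (i:ℝ) ≤ k := by exact_mod_cast hi2
      set y : ℝ := (i:ℝ) - 1 with hydef
      have hym : (m:ℝ) ≤ y := by
        have : (m:ℝ) + 1 ≤ (i:ℝ) := by exact_mod_cast hi1
        simp only [hydef]; linarith
      have hyq : (k:ℝ) / 4 ≤ y := le_trans hmR4 hym
      have hypos : 0 < y := by linarith
      have hfnn : (0:ℝ) ≤ ((k:ℝ) - ((i:ℝ) - 1)) ^ β - ((k:ℝ) - (i:ℝ)) ^ β :=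
        sub_nonneg.mpr (Real.rpow_le_rpow (by linarith : (0:ℝ) ≤ (k:ℝ) - (i:ℝ))
          (by linarith : (k:ℝ) - (i:ℝ) ≤ (k:ℝ) - ((i:ℝ) - 1)) hβ0.le)
      have hg1 : (i:ℝ) ^ α - ((i:ℝ) - 1) ^ α ≤ α * y ^ (α - 1) := by
        have hy1 : (i:ℝ) = y + 1 := by simp only [hydef]; ring
        rw [← hydef, hy1]
        exact bern_aux hα0 hα1.le hypos
      have hg2 : α * y ^ (α - 1) ≤ α * ((k:ℝ) / 4) ^ (α - 1) :=
        mul_le_mul_of_nonneg_left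
          (Real.rpow_le_rpow_of_nonpos (by linarith) hyq (by linarith)) hα0.le
      have hg3 : ((k:ℝ) / 4) ^ (α - 1) ≤ 4 * (k:ℝ) ^ (α - 1) :=
        quarter_aux hkpos (by norm_num) (by norm_num) (by linarith) (by linarith)
      have hgle : (i:ℝ) ^ α - ((i:ℝ) - 1) ^ α ≤ 4 * α * (k:ℝ) ^ (α - 1) := by
        calc (i:ℝ) ^ α - ((i:ℝ) - 1) ^ α ≤ α * y ^ (α - 1) := hg1
          _ ≤ α * ((k:ℝ) / 4) ^ (α - 1) := hg2
          _ ≤ α * (4 * (k:ℝ) ^ (α - 1)) := mul_le_mul_of_nonneg_left hg3 hα0.le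
          _ = 4 * α * (k:ℝ) ^ (α - 1) := by ring
      exact mul_le_mul_of_nonneg_left hgle hfnn
    -- telescope for the β-factor
    have htel2 : ∑ i ∈ Finset.Ioc m k, (((k:ℝ) - ((i:ℝ) - 1)) ^ β - ((k:ℝ) - (i:ℝ)) ^ β)
        = ((k:ℝ) - m) ^ β := by
      have h := tel_aux (fun j => -(((k:ℝ) - (j:ℕ)) ^ β)) m k hmk
      simp only [sub_self] at h
      have heq : ∑ i ∈ Finset.Ioc m k, (((k:ℝ) - ((i:ℝ) - 1)) ^ β - ((k:ℝ) - (i:ℝ)) ^ β)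
          = ∑ i ∈ Finset.Ioc m k,
              ((fun j => -(((k:ℝ) - (j:ℕ)) ^ β)) i - (fun j => -(((k:ℝ) - (j:ℕ)) ^ β)) (i - 1)) := by
        apply Finset.sum_congr rfl
        intro i hi
        rw [Finset.mem_Ioc] at hi
        have hc : ((i - 1 : ℕ) : ℝ) = (i:ℝ) - 1 := by
          have h1i : 1 ≤ i := le_trans hm1 (le_of_lt hi.1)
          push_cast [h1i]
          ring
        simp only [hc]
        ring
      rw [heq, h, Real.zero_rpow hβ0.ne']
      ring
    -- combine
    have hrnn : (0:ℝ) ≤ (k:ℝ) ^ (α + β - 1) := Real.rpow_nonneg hkpos.le _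
    have hpow1 : (k:ℝ) ^ (β - 1) * (k:ℝ) ^ α = (k:ℝ) ^ (α + β - 1) := by
      rw [← Real.rpow_add hkpos, show β - 1 + α = α + β - 1 by ring]
    have hpow2 : (k:ℝ) ^ β * (k:ℝ) ^ (α - 1) = (k:ℝ) ^ (α + β - 1) := by
      rw [← Real.rpow_add hkpos, show β + (α - 1) = α + β - 1 by ring]
    have hmkα : (m:ℝ) ^ α ≤ (k:ℝ) ^ α :=
      Real.rpow_le_rpow (by positivity) (by exact_mod_cast hmk) hα0.le
    have hkmβ : ((k:ℝ) - m) ^ β ≤ (k:ℝ) ^ β := by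
      have hmnn : (0:ℝ) ≤ m := by positivity
      have : (0:ℝ) ≤ (k:ℝ) - m := by
        have : (m:ℝ) ≤ k := by exact_mod_cast hmk
        linarith
      exact Real.rpow_le_rpow this (by linarith) hβ0.le
    have hB1 : (∑ i ∈ Finset.Ioc 0 m,
          (((k:ℝ) - ((i:ℝ) - 1)) ^ β - ((k:ℝ) - (i:ℝ)) ^ β) * ((i:ℝ) ^ α - ((i:ℝ) - 1) ^ α))
        ≤ 4 * β * (k:ℝ) ^ (α + β - 1) := by
      rw [htel1] at hS1
      refine le_trans hS1 ?_
      calc 4 * β * (k:ℝ) ^ (β - 1) * (m:ℝ) ^ α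
          ≤ 4 * β * (k:ℝ) ^ (β - 1) * (k:ℝ) ^ α := by
            apply mul_le_mul_of_nonneg_left hmkα
            positivity
        _ = 4 * β * (k:ℝ) ^ (α + β - 1) := by rw [mul_assoc, hpow1]
    have hB2 : (∑ i ∈ Finset.Ioc m k,
          (((k:ℝ) - ((i:ℝ) - 1)) ^ β - ((k:ℝ) - (i:ℝ)) ^ β) * ((i:ℝ) ^ α - ((i:ℝ) - 1) ^ α))
        ≤ 4 * α * (k:ℝ) ^ (α + β - 1) := by
      rw [htel2] at hS2
      refine le_trans hS2 ?_
      calc ((k:ℝ) - m) ^ β * (4 * α * (k:ℝ) ^ (α - 1))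
          ≤ (k:ℝ) ^ β * (4 * α * (k:ℝ) ^ (α - 1)) := by
            apply mul_le_mul_of_nonneg_right hkmβ
            positivity
        _ = 4 * α * ((k:ℝ) ^ β * (k:ℝ) ^ (α - 1)) := by ring
        _ = 4 * α * (k:ℝ) ^ (α + β - 1) := by rw [hpow2]
    have hfin : 4 * β * (k:ℝ) ^ (α + β - 1) + 4 * α * (k:ℝ) ^ (α + β - 1)
        ≤ 8 * (k:ℝ) ^ (α + β - 1) := by
      nlinarith [hrnn]
    linarith

/-- Grid estimate: with `t_i = iT/n`, for `α, β ∈ (0,1)` there is `C = C(α,β)` such that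
`∑_{i=1}^k ((t_k - t_{i-1})^β - (t_k - t_i)^β)(t_i^α - t_{i-1}^α) ≤ C (T/n)^(α+β) k^(α+β-1)`. -/
theorem stmt_3 (α β : ℝ) (hα : α ∈ Set.Ioo (0 : ℝ) 1) (hβ : β ∈ Set.Ioo (0 : ℝ) 1) :
    ∃ C : ℝ, 0 < C ∧ ∀ T : ℝ, 0 < T → ∀ n : ℕ, 1 ≤ n → ∀ k : ℕ, k ≤ n →
      ∑ i ∈ Finset.Icc 1 k,
        (((k : ℝ) * T / n - ((i : ℝ) - 1) * T / n) ^ β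
            - ((k : ℝ) * T / n - (i : ℝ) * T / n) ^ β)
          * (((i : ℝ) * T / n) ^ α - (((i : ℝ) - 1) * T / n) ^ α)
        ≤ C * (T / n) ^ (α + β) * (k : ℝ) ^ (α + β - 1) := by
  refine ⟨8, by norm_num, ?_⟩
  intro T hT n hn k hkn
  have hn0 : (0:ℝ) < n := by exact_mod_cast hn
  have hh : (0:ℝ) < T / n := by positivity
  rcases Nat.eq_zero_or_pos k with hk0 | hk1
  · subst hk0
    rw [show Finset.Icc 1 0 = (∅ : Finset ℕ) from rfl]
    simp only [Finset.sum_empty]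
    positivity
  · have hrw : ∑ i ∈ Finset.Icc 1 k,
        (((k : ℝ) * T / n - ((i : ℝ) - 1) * T / n) ^ β
            - ((k : ℝ) * T / n - (i : ℝ) * T / n) ^ β)
          * (((i : ℝ) * T / n) ^ α - (((i : ℝ) - 1) * T / n) ^ α)
        = (T / n) ^ (α + β) * ∑ i ∈ Finset.Icc 1 k,
            (((k:ℝ) - ((i:ℝ) - 1)) ^ β - ((k:ℝ) - (i:ℝ)) ^ β)
              * ((i:ℝ) ^ α - ((i:ℝ) - 1) ^ α) := by
      rw [Finset.mul_sum]
      apply Finset.sum_congr rfl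
      intro i hi
      rw [Finset.mem_Icc] at hi
      obtain ⟨hi1, hi2⟩ := hi
      have hi1R : (1:ℝ) ≤ i := by exact_mod_cast hi1
      have hi2R : (i:ℝ) ≤ k := by exact_mod_cast hi2
      have e1 : (k:ℝ) * T / n - ((i:ℝ) - 1) * T / n = ((k:ℝ) - ((i:ℝ) - 1)) * (T / n) := by
        ring
      have e2 : (k:ℝ) * T / n - (i:ℝ) * T / n = ((k:ℝ) - (i:ℝ)) * (T / n) := by ring
      have e3 : (i:ℝ) * T / n = (i:ℝ) * (T / n) := by ring
      have e4 : ((i:ℝ) - 1) * T / n = ((i:ℝ) - 1) * (T / n) := by ring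
      rw [e1, e2, e3, e4,
        Real.mul_rpow (by linarith) hh.le, Real.mul_rpow (by linarith) hh.le,
        Real.mul_rpow (by linarith) hh.le, Real.mul_rpow (by linarith) hh.le,
        Real.rpow_add hh α β]
      ring
    rw [hrw]
    have hle := disc_aux hα hβ k hk1
    calc (T / n) ^ (α + β) * ∑ i ∈ Finset.Icc 1 k,
            (((k:ℝ) - ((i:ℝ) - 1)) ^ β - ((k:ℝ) - (i:ℝ)) ^ β)
              * ((i:ℝ) ^ α - ((i:ℝ) - 1) ^ α)
        ≤ (T / n) ^ (α + β) * (8 * (k:ℝ) ^ (α + β - 1)) :=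
          mul_le_mul_of_nonneg_left hle (Real.rpow_nonneg hh.le _)
      _ = 8 * (T / n) ^ (α + β) * (k:ℝ) ^ (α + β - 1) := by ring
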